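/- (Schur complement identity for the 3-replica bulk Hamiltonian.) Let ξ ∈ ℂ, m, ε ∈ ℝ, write B := B_m, and let Ĥ₁(ξ) be the 6×6 matrix with 2×2 blocks indexed by k, k' ∈ {1, 0, −1}: diagonal blocks k·I₂ + ξ·σ, blocks (k, k−1) equal to εB, blocks (k, k+1) equal to εB*, other blocks zero. Let z ∈ ℂ be such that (z−1)² ≠ |ξ|², (z+1)² ≠ |ξ|², and such that the 2×2 matrix S(z) := z·I₂ − ξ·σ − ε²·(B*·((z−1)·I₂ − ξ·σ)⁻¹·B + B·((z+1)·I₂ − ξ·σ)⁻¹·B*) is invertible. Then z·I₆ − Ĥ₁(ξ) is invertible and the central 2×2 block (block index (0,0)) of (z·I₆ − Ĥ₁(ξ))⁻¹ equals S(z)⁻¹. -/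

import Mathlib

open Matrix Complex
open scoped Kronecker

noncomputable section

def σ1 : Matrix (Fin 2) (Fin 2) ℂ := !![0, 1; 1, 0]
def σ2 : Matrix (Fin 2) (Fin 2) ℂ := !![0, -Complex.I; Complex.I, 0]
def σ3 : Matrix (Fin 2) (Fin 2) ℂ := !![1, 0; 0, -1]

/-- `ξ·σ = ξ₁σ₁ + ξ₂σ₂ = !![0, conj ξ; ξ, 0]`. -/
def xiSigma (ξ : ℂ) : Matrix (Fin 2) (Fin 2) ℂ := !![0, (starRingEnd ℂ) ξ; ξ, 0]

def Bm (m : ℝ) : Matrix (Fin 2) (Fin 2) ℂ :=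
  (((1 + m) / 2 : ℝ) : ℂ) • !![0, 1; 0, 0] + (((1 - m) / 2 : ℝ) : ℂ) • !![0, 0; 1, 0]

/-- The 2×2 block of the bulk replica Hamiltonian at block position `(k, k')`. -/
def replicaBlock (ξ : ℂ) (m ε : ℝ) (k k' : ℤ) : Matrix (Fin 2) (Fin 2) ℂ :=
  if k' = k then (k : ℂ) • (1 : Matrix (Fin 2) (Fin 2) ℂ) + xiSigma ξ
  else if k' = k - 1 then (ε : ℂ) • Bm m
  else if k' = k + 1 then (ε : ℂ) • (Bm m)ᴴ
  else 0

/-- The bulk replica Hamiltonian `Ĥ_n(ξ)`, block tridiagonal with blocks indexed by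
`k, k' ∈ {-n, …, n}` (here realized by `Fin (2n+1)` via `k = j - n`). -/
def Hrep (n : ℕ) (ξ : ℂ) (m ε : ℝ) :
    Matrix (Fin (2 * n + 1) × Fin 2) (Fin (2 * n + 1) × Fin 2) ℂ :=
  fun p q => replicaBlock ξ m ε ((p.1 : ℤ) - n) ((q.1 : ℤ) - n) p.2 q.2

/-- Reindexing of the 3-replica index set into center block ⊕ (lower ⊕ upper). -/
def eIdx : Fin (2*1+1) × Fin 2 ≃ (Fin 2 ⊕ (Fin 2 ⊕ Fin 2)) where
  toFun p := if p.1 = 1 then .inl p.2 else if p.1 = 0 then .inr (.inl p.2) else .inr (.inr p.2)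
  invFun q := match q with
    | .inl a => (1, a) | .inr (.inl a) => (0, a) | .inr (.inr a) => (2, a)
  left_inv := by decide
  right_inv := by decide

lemma unit_aux (ξ : ℂ) (a : ℂ) (h : a ^ 2 ≠ ((‖ξ‖ : ℂ)) ^ 2) :
    IsUnit (a • (1 : Matrix (Fin 2) (Fin 2) ℂ) - xiSigma ξ).det := by
  have : (a • (1 : Matrix (Fin 2) (Fin 2) ℂ) - xiSigma ξ).det
      = a ^ 2 - (‖ξ‖ : ℂ) ^ 2 := by
    simp [xiSigma, smul_eq_mul, Matrix.det_fin_two, Matrix.one_apply]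
    rw [show ((‖ξ‖ : ℂ)) ^ 2 = (starRingEnd ℂ) ξ * ξ by
      rw [← Complex.ofReal_pow, Complex.sq_norm, Complex.normSq_eq_conj_mul_self]]
    ring
  rw [this, isUnit_iff_ne_zero]
  exact sub_ne_zero_of_ne h

/-- Schur complement identity for the 3-replica bulk Hamiltonian:
if `(z∓1)² ≠ |ξ|²` and the Schur complement `S(z)` is invertible, then `z I₆ - Ĥ₁(ξ)` is
invertible and the central `2×2` block of its inverse is `S(z)⁻¹`. -/
theorem schur_central_block (ξ : ℂ) (m ε : ℝ) (z : ℂ)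
    (h1 : (z - 1) ^ 2 ≠ ((‖ξ‖ : ℂ)) ^ 2)
    (h2 : (z + 1) ^ 2 ≠ ((‖ξ‖ : ℂ)) ^ 2)
    (S : Matrix (Fin 2) (Fin 2) ℂ)
    (hS : S = z • (1 : Matrix (Fin 2) (Fin 2) ℂ) - xiSigma ξ -
        ((ε : ℂ)) ^ 2 •
          ((Bm m)ᴴ * ((z - 1) • (1 : Matrix (Fin 2) (Fin 2) ℂ) - xiSigma ξ)⁻¹ * Bm m +
            Bm m * ((z + 1) • (1 : Matrix (Fin 2) (Fin 2) ℂ) - xiSigma ξ)⁻¹ * (Bm m)ᴴ))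
    (hSinv : IsUnit S) :
    IsUnit (z • (1 : Matrix (Fin (2 * 1 + 1) × Fin 2) (Fin (2 * 1 + 1) × Fin 2) ℂ)
        - Hrep 1 ξ m ε) ∧
    ∀ i j : Fin 2,
      (z • (1 : Matrix (Fin (2 * 1 + 1) × Fin 2) (Fin (2 * 1 + 1) × Fin 2) ℂ)
          - Hrep 1 ξ m ε)⁻¹ ((1 : Fin (2 * 1 + 1)), i) ((1 : Fin (2 * 1 + 1)), j)
        = S⁻¹ i j := by
  set A0 : Matrix (Fin 2) (Fin 2) ℂ := z • 1 - xiSigma ξ with hA0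
  set Ap : Matrix (Fin 2) (Fin 2) ℂ := (z + 1) • 1 - xiSigma ξ with hAp
  set Am : Matrix (Fin 2) (Fin 2) ℂ := (z - 1) • 1 - xiSigma ξ with hAm
  letI : Invertible Ap.det := (unit_aux ξ (z + 1) h2).invertible
  letI : Invertible Am.det := (unit_aux ξ (z - 1) h1).invertible
  letI iAp : Invertible Ap := Ap.invertibleOfDetInvertible
  letI iAm : Invertible Am := Am.invertibleOfDetInvertible
  set Bb : Matrix (Fin 2) (Fin 2 ⊕ Fin 2) ℂ :=
    fromCols (-((ε : ℂ) • Bm m)) (-((ε : ℂ) • (Bm m)ᴴ)) with hBb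
  set Cb : Matrix (Fin 2 ⊕ Fin 2) (Fin 2) ℂ :=
    fromRows (-((ε : ℂ) • (Bm m)ᴴ)) (-((ε : ℂ) • Bm m)) with hCb
  letI iD : Invertible (fromBlocks Ap 0 0 Am) := Matrix.fromBlocksZero₂₁Invertible Ap 0 Am
  have hinvD : ⅟(fromBlocks Ap 0 0 Am) = fromBlocks (⅟Ap) 0 0 (⅟Am) := by
    rw [Matrix.invOf_fromBlocks_zero₂₁_eq]
    simp
  have hSchur : A0 - Bb * ⅟(fromBlocks Ap 0 0 Am) * Cb = S := by
    rw [hinvD, hBb, Matrix.fromCols_mul_fromBlocks, hCb, Matrix.fromCols_mul_fromRows, hS,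
      invOf_eq_nonsing_inv, invOf_eq_nonsing_inv]
    simp only [Matrix.mul_zero, Matrix.zero_mul, add_zero, zero_add, Matrix.neg_mul,
      Matrix.mul_neg, neg_neg, Matrix.smul_mul, Matrix.mul_smul, smul_smul]
    module
  letI iS : Invertible S := hSinv.invertible
  letI iSc : Invertible (A0 - Bb * ⅟(fromBlocks Ap 0 0 Am) * Cb) := hSchur ▸ iS
  letI iM' : Invertible (fromBlocks A0 Bb Cb (fromBlocks Ap 0 0 Am)) :=
    Matrix.fromBlocks₂₂Invertible A0 Bb Cb (fromBlocks Ap 0 0 Am)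
  have hM : (z • (1 : Matrix (Fin (2 * 1 + 1) × Fin 2) (Fin (2 * 1 + 1) × Fin 2) ℂ)
      - Hrep 1 ξ m ε)
      = (fromBlocks A0 Bb Cb (fromBlocks Ap 0 0 Am)).submatrix eIdx eIdx := by
    rw [hA0, hAp, hAm, hBb, hCb]
    ext ⟨i, a⟩ ⟨j, b⟩
    fin_cases i <;> fin_cases j <;>
      simp [Hrep, replicaBlock, eIdx, Matrix.one_apply, Prod.ext_iff, Fin.ext_iff, -Fin.val_eq_zero_iff] <;>
      norm_num <;> split_ifs <;> ring
  letI iM : Invertible (z • (1 : Matrix (Fin (2 * 1 + 1) × Fin 2) (Fin (2 * 1 + 1) × Fin 2) ℂ)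
      - Hrep 1 ξ m ε) := by
    rw [hM]
    exact Matrix.submatrixEquivInvertible (fromBlocks A0 Bb Cb (fromBlocks Ap 0 0 Am)) eIdx eIdx
  refine ⟨isUnit_of_invertible _, fun i j => ?_⟩
  rw [hM, Matrix.inv_submatrix_equiv]
  show (fromBlocks A0 Bb Cb (fromBlocks Ap 0 0 Am))⁻¹
      (eIdx ((1 : Fin (2 * 1 + 1)), i)) (eIdx ((1 : Fin (2 * 1 + 1)), j)) = S⁻¹ i j
  rw [show eIdx ((1 : Fin (2 * 1 + 1)), i) = Sum.inl i by simp [eIdx],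
    show eIdx ((1 : Fin (2 * 1 + 1)), j) = Sum.inl j by simp [eIdx],
    ← invOf_eq_nonsing_inv, Matrix.invOf_fromBlocks₂₂_eq]
  simp only [Matrix.fromBlocks_apply₁₁]
  rw [show ⅟(A0 - Bb * ⅟(fromBlocks Ap 0 0 Am) * Cb) = S⁻¹ by
    rw [invOf_eq_nonsing_inv, hSchur]]
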